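/- Let G = (V,E) be a directed mixed graph and α, β ∈ V. If there exists a directed inducing path from α to β in G, then the DMG G⁺ obtained from G by adding the directed edge α→β satisfies I(G⁺) = I(G). -/

import Mathlib

/-!
Directed mixed graphs (DMGs) with μ-separation, following
Mogensen & Hansen, "Markov equivalence of marginalized local independence graphs".
-/

universe u

/-- A directed mixed graph on node set `V`: a set of directed edges (`dir a b`
meaning `a → b`) and a set of bidirected edges (`bi`, a symmetric relation since
bidirected edges are unordered pairs).  Loops are allowed. -/
structure DMG (V : Type u) where
  dir : V → V → Prop
  bi : V → V → Prop
  bi_symm : ∀ a b, bi a b → bi b a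

namespace DMG

variable {V : Type u}

/-- A single step of a walk: an edge instance together with the direction in
which it is traversed (this records, in particular, orientations of loops).
A directed edge has a tail at its source and a head at its target; a bidirected
edge has heads at both endpoints. -/
inductive Step (G : DMG V) : V → V → Type u
  | dirF : ∀ {a b : V}, G.dir a b → Step G a b
  | dirB : ∀ {a b : V}, G.dir b a → Step G a b
  | bid  : ∀ {a b : V}, G.bi a b → Step G a b

/-- Whether the step has a head (edge mark) at its start node. -/
def Step.headStart {G : DMG V} : ∀ {a b : V}, Step G a b → Bool
  | _, _, .dirF _ => false
  | _, _, .dirB _ => true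
  | _, _, .bid _ => true

/-- Whether the step has a head (edge mark) at its end node. -/
def Step.headEnd {G : DMG V} : ∀ {a b : V}, Step G a b → Bool
  | _, _, .dirF _ => true
  | _, _, .dirB _ => false
  | _, _, .bid _ => true

/-- The step traverses a bidirected edge. -/
def Step.IsBid {G : DMG V} {a b : V} : Step G a b → Prop
  | .bid _ => True
  | _ => False

/-- The step traverses a directed edge, forwards. -/
def Step.IsDirF {G : DMG V} {a b : V} : Step G a b → Prop
  | .dirF _ => True
  | _ => False

/-- The underlying edge of a step: a directed edge is the ordered pair
(tail, head); a bidirected edge is the unordered pair of its endpoints. -/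
def Step.edge {G : DMG V} : ∀ {a b : V}, Step G a b → (V × V) ⊕ (Sym2 V)
  | a, b, .dirF _ => Sum.inl (a, b)
  | a, b, .dirB _ => Sum.inl (b, a)
  | a, b, .bid _ => Sum.inr s(a, b)

/-- A walk in a DMG: an alternating sequence of nodes and edges, each edge
between its neighbouring nodes, with a chosen orientation of each edge
(in particular of each directed loop). -/
inductive Walk (G : DMG V) : V → V → Type u
  | nil (a : V) : Walk G a a
  | cons {a b c : V} (s : Step G a b) (w : Walk G b c) : Walk G a c

namespace Walk

variable {G : DMG V}

/-- A nontrivial walk contains at least one edge. -/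
def Nontrivial : ∀ {a b : V}, Walk G a b → Prop
  | _, _, .nil _ => False
  | _, _, .cons _ _ => True

/-- The list of nodes of a walk, in order (with multiplicity). -/
def nodes : ∀ {a b : V}, Walk G a b → List V
  | a, _, .nil _ => [a]
  | a, _, .cons _ w => a :: w.nodes

/-- The non-endpoint (internal) nodes of a walk, in order (with multiplicity). -/
def interior {a b : V} (w : Walk G a b) : List V :=
  (w.nodes.dropLast).drop 1

/-- The list of edges of a walk. -/
def edges : ∀ {a b : V}, Walk G a b → List ((V × V) ⊕ (Sym2 V))
  | _, _, .nil _ => []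
  | _, _, .cons s w => s.edge :: w.edges

/-- Whether the first edge of the walk has a head at the first node
(`false` for a trivial walk). -/
def firstHead : ∀ {a b : V}, Walk G a b → Bool
  | _, _, .nil _ => false
  | _, _, .cons s _ => s.headStart

/-- Whether the last edge of the walk has a head at the last node
(`false` for a trivial walk). -/
def lastHead : ∀ {a b : V}, Walk G a b → Bool
  | _, _, .nil _ => false
  | _, _, .cons s (.nil _) => s.headEnd
  | _, _, .cons _ (.cons t w) => lastHead (Walk.cons t w)

/-- Helper: conditions at all remaining internal node instances of a walk,
where `h` records whether the edge arriving at the current start node has a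
head there.  A node instance is a collider if both adjoining edges have a
head at it; a collider must lie in `Anc`, a noncollider must avoid `C`. -/
def openFrom (C Anc : Set V) : ∀ {a b : V}, Bool → Walk G a b → Prop
  | _, _, _, .nil _ => True
  | a, _, h, .cons s w =>
      (if h && s.headStart then a ∈ Anc else a ∉ C) ∧ openFrom C Anc s.headEnd w

/-- Helper: every remaining internal node instance which is a collider lies in `S`. -/
def collInFrom (S : Set V) : ∀ {a b : V}, Bool → Walk G a b → Prop
  | _, _, _, .nil _ => True
  | a, _, h, .cons s w =>
      ((h && s.headStart) = true → a ∈ S) ∧ collInFrom S s.headEnd w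

/-- Every collider (internal node instance with heads on both sides) of the
walk lies in `S`. -/
def CollidersIn (S : Set V) : ∀ {a b : V}, Walk G a b → Prop
  | _, _, .nil _ => True
  | _, _, .cons s w => collInFrom S s.headEnd w

/-- The walk has no colliders. -/
def NoColliders {a b : V} (w : Walk G a b) : Prop :=
  w.CollidersIn ∅

/-- Helper: every remaining internal node instance is a collider. -/
def allCollFrom : ∀ {a b : V}, Bool → Walk G a b → Prop
  | _, _, _, .nil _ => True
  | _, _, h, .cons s w => (h && s.headStart) = true ∧ allCollFrom s.headEnd w

/-- Every internal node instance of the walk is a collider (no noncolliders). -/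
def AllColliders : ∀ {a b : V}, Walk G a b → Prop
  | _, _, .nil _ => True
  | _, _, .cons s w => allCollFrom s.headEnd w

/-- Every edge of the walk is bidirected. -/
def AllBid : ∀ {a b : V}, Walk G a b → Prop
  | _, _, .nil _ => True
  | _, _, .cons s w => s.IsBid ∧ w.AllBid

/-- The walk consists of a directed first edge (pointing forwards) followed by
bidirected edges only (the form `α → β` or `α → γ₁ ↔ ⋯ ↔ γₙ ↔ β`). -/
def UniForm : ∀ {a b : V}, Walk G a b → Prop
  | _, _, .nil _ => False
  | _, _, .cons s w => s.IsDirF ∧ w.AllBid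

end Walk

/-- `a` is an ancestor of `b`: there is a (possibly trivial) directed path
from `a` to `b`. -/
def anc (G : DMG V) (a b : V) : Prop := Relation.ReflTransGen G.dir a b

/-- The set of ancestors of nodes of `C`. -/
def anSet (G : DMG V) (C : Set V) : Set V := {a | ∃ c ∈ C, G.anc a c}

/-- The walk is μ-connecting given `C`: it is nontrivial, its first node is not
in `C`, every collider lies in `An(C)`, no noncollider lies in `C`, and its
final edge has a head at the final node. -/
def Walk.MuConn {G : DMG V} (C : Set V) : ∀ {a b : V}, Walk G a b → Prop
  | _, _, .nil _ => False
  | a, _, .cons s w =>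
      a ∉ C ∧ Walk.openFrom C (G.anSet C) s.headEnd w ∧ (Walk.cons s w).lastHead = true

/-- `B` is μ-separated from `A` given `C` in `G`: there is no μ-connecting
walk from any node of `A` to any node of `B` given `C`. -/
def muSep (G : DMG V) (A B C : Set V) : Prop :=
  ∀ ⦃a b : V⦄, a ∈ A → b ∈ B → ∀ w : Walk G a b, ¬ w.MuConn C

/-- Two DMGs on the same node set are Markov equivalent: they induce the same
independence model via μ-separation, i.e. `I(G₁) = I(G₂)`. -/
def MarkovEq (G₁ G₂ : DMG V) : Prop :=
  ∀ A B C : Set V, muSep G₁ A B C ↔ muSep G₂ A B C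

/-- `b` is separable from `a` in `I(G)`: there is `C ⊆ V ∖ {a}` with
`⟨{a},{b} | C⟩ ∈ I(G)`. -/
def separable (G : DMG V) (a b : V) : Prop :=
  ∃ C : Set V, a ∉ C ∧ muSep G {a} {b} C

/-- `a ∈ u(b, I(G))`: `b` is inseparable from `a` in `I(G)`. -/
def inU (G : DMG V) (a b : V) : Prop := ¬ G.separable a b

/-- `G₁` is a subgraph of `G₂` (same node set, edge-set inclusion). -/
def Sub (G₁ G₂ : DMG V) : Prop :=
  (∀ a b, G₁.dir a b → G₂.dir a b) ∧ (∀ a b, G₁.bi a b → G₂.bi a b)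

/-- The DMG obtained by adding the directed edge `a → b`. -/
def addDir (G : DMG V) (a b : V) : DMG V where
  dir x y := G.dir x y ∨ (x = a ∧ y = b)
  bi := G.bi
  bi_symm := G.bi_symm

/-- The DMG obtained by adding the bidirected edge `a ↔ b`. -/
def addBi (G : DMG V) (a b : V) : DMG V where
  dir := G.dir
  bi x y := G.bi x y ∨ (x = a ∧ y = b) ∨ (x = b ∧ y = a)
  bi_symm x y h := by
    rcases h with h | h | h
    · exact Or.inl (G.bi_symm _ _ h)
    · exact Or.inr (Or.inr ⟨h.2, h.1⟩)
    · exact Or.inr (Or.inl ⟨h.2, h.1⟩)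

/-- The DMG obtained by removing the directed edge `a → b`. -/
def removeDir (G : DMG V) (a b : V) : DMG V where
  dir x y := G.dir x y ∧ ¬(x = a ∧ y = b)
  bi := G.bi
  bi_symm := G.bi_symm

/-- The DMG obtained by removing the bidirected edge `a ↔ b`. -/
def removeBi (G : DMG V) (a b : V) : DMG V where
  dir := G.dir
  bi x y := G.bi x y ∧ ¬((x = a ∧ y = b) ∨ (x = b ∧ y = a))
  bi_symm x y h := ⟨G.bi_symm _ _ h.1, fun hc => h.2 (by tauto)⟩

/-- The complete DMG: all directed and all bidirected edges present. -/
def IsComplete (G : DMG V) : Prop :=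
  (∀ a b, G.dir a b) ∧ (∀ a b, G.bi a b)

/-- A DMG is maximal if it is complete, or adding any (absent) edge changes the
induced independence model. -/
def IsMaximal (G : DMG V) : Prop :=
  G.IsComplete ∨
    ∀ a b : V, (¬ G.dir a b → ¬ MarkovEq (G.addDir a b) G) ∧
      (¬ G.bi a b → ¬ MarkovEq (G.addBi a b) G)

end DMG
namespace DMG

variable {V : Type u}

/-- An inducing path from `a` to `b`: a nontrivial path or cycle from `a` to
`b` with a head at `b`, with no noncolliders, and on which every node is an
ancestor of `a` or of `b`. -/
def IsInducingPath (G : DMG V) {a b : V} (w : Walk G a b) : Prop :=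
  w.Nontrivial ∧
  (w.nodes.Nodup ∨ (a = b ∧ w.nodes.dropLast.Nodup)) ∧
  w.lastHead = true ∧
  w.AllColliders ∧
  ∀ x ∈ w.nodes, G.anc x a ∨ G.anc x b

/-- A bidirected inducing path: an inducing path all of whose edges are bidirected. -/
def IsBidirectedIP (G : DMG V) {a b : V} (w : Walk G a b) : Prop :=
  G.IsInducingPath w ∧ w.AllBid

/-- A directed inducing path: an inducing path of the form `α → β` or
`α → γ₁ ↔ ⋯ ↔ γₙ ↔ β` with every `γᵢ` an ancestor of `β`. -/
def IsDirectedIP (G : DMG V) {a b : V} (w : Walk G a b) : Prop :=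
  G.IsInducingPath w ∧ w.UniForm ∧ ∀ x ∈ w.interior, G.anc x b

/-- There exists a nontrivial walk in `G` between `x` and `y` with no
colliders, all non-endpoint nodes in `M`, and with edge marks `hs` at `x`
(`true` = head) and `he` at `y`. -/
def ConnThrough (G : DMG V) (M : Set V) (x y : V) (hs he : Bool) : Prop :=
  ∃ w : Walk G x y, w.Nontrivial ∧ w.NoColliders ∧
    (∀ z ∈ w.interior, z ∈ M) ∧ w.firstHead = hs ∧ w.lastHead = he

/-- The latent projection `m(G, O)` of `G` on `O`: the DMG on node set `O`
having an edge (with given endpoint marks) between `α` and `β` if and only if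
`G` contains a nontrivial endpoint-identical walk between `α` and `β` with no
colliders and all non-endpoint nodes in `M = V ∖ O`. -/
def latentProj (G : DMG V) (O : Set V) : DMG {x : V // x ∈ O} where
  dir x y := ConnThrough G Oᶜ x.1 y.1 false true
  bi x y := ConnThrough G Oᶜ x.1 y.1 true true ∨ ConnThrough G Oᶜ y.1 x.1 true true
  bi_symm x y h := h.symm

/-- `x` is directedly collider-connected to `b`: there is a nontrivial walk
from `x` to `b` with a head at `b` on which every non-endpoint node is a
collider. -/
def dirCollConn (G : DMG V) (x b : V) : Prop :=
  ∃ w : Walk G x b, w.Nontrivial ∧ w.AllColliders ∧ w.lastHead = true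

/-- The set `D(a,b)` of nodes in `An({a,b})` directedly collider-connected to
`b`, except `a`. -/
def Dset (G : DMG V) (a b : V) : Set V :=
  {x | x ∈ G.anSet {a, b} ∧ G.dirCollConn x b} \ {a}

/-- `a` and `b` are potential siblings in the independence model `I(G)`. -/
def PotSib (G : DMG V) (a b : V) : Prop :=
  (G.inU b a ∧ G.inU a b) ∧
  (∀ (γ : V) (C : Set V), b ∈ C → muSep G {γ} {a} C → muSep G {γ} {b} C) ∧
  (∀ (γ : V) (C : Set V), a ∈ C → muSep G {γ} {b} C → muSep G {γ} {a} C)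

/-- `a` is a potential parent of `b` in the independence model `I(G)`. -/
def PotPar (G : DMG V) (a b : V) : Prop :=
  G.inU a b ∧
  (∀ (γ : V) (C : Set V), a ∉ C → muSep G {γ} {b} C → muSep G {γ} {a} C) ∧
  (∀ (γ δ : V) (C : Set V), a ∉ C → b ∈ C →
    muSep G {γ} {δ} C → muSep G {γ} {b} C ∨ muSep G {a} {δ} C) ∧
  (∀ (γ : V) (C : Set V), a ∉ C → muSep G {b} {γ} C → muSep G {b} {γ} (C ∪ {a}))

/-- The graph `N(I(G))`: directed edge `a → b` present iff `a` is a potential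
parent of `b` in `I(G)`, bidirected edge `a ↔ b` present iff `a` and `b` are
potential siblings in `I(G)` (potential siblinghood is symmetric). -/
def NGraph (G : DMG V) : DMG V where
  dir a b := G.PotPar a b
  bi a b := G.PotSib a b ∨ G.PotSib b a
  bi_symm _ _ h := h.symm

/-- A path is m-connecting given `C` if it is a path (no repeated nodes), no
noncollider on it is in `C` and every collider on it is in `An(C)`. -/
def Walk.MConn {G : DMG V} (C : Set V) : ∀ {a b : V}, Walk G a b → Prop
  | _, _, .nil _ => True
  | _, _, .cons s w =>
      (Walk.cons s w).nodes.Nodup ∧ Walk.openFrom C (G.anSet C) s.headEnd w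

/-- `A` and `B` are m-separated by `C`: there is no m-connecting path between
a node of `A` and a node of `B` given `C`. -/
def mSep (G : DMG V) (A B C : Set V) : Prop :=
  ∀ ⦃a b : V⦄, a ∈ A → b ∈ B →
    (∀ w : Walk G a b, ¬ w.MConn C) ∧ (∀ w : Walk G b a, ¬ w.MConn C)

/-- Auxiliary directed-edge relation of the `B`-history version of `G`. -/
def histDir (G : DMG V) (B : Set V) : (V ⊕ {x : V // x ∈ B}) → (V ⊕ {x : V // x ∈ B}) → Prop
  | .inl u, .inl v => G.dir u v
  | .inl u, .inr v => G.dir u v.1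
  | _, _ => False

/-- Auxiliary bidirected-edge relation of the `B`-history version of `G`. -/
def histBi (G : DMG V) (B : Set V) : (V ⊕ {x : V // x ∈ B}) → (V ⊕ {x : V // x ∈ B}) → Prop
  | .inl u, .inl v => G.bi u v
  | .inl u, .inr v => G.bi u v.1
  | .inr u, .inl v => G.bi u.1 v
  | .inr _, .inr _ => False

/-- The `B`-history version `G(B)` of `G`: node set `V ⊔ Bᵖ`, whose subgraph
on `V` is `G`, with additionally `α ↔ βᵖ` whenever `α ↔ β` in `G` and
`α → βᵖ` whenever `α → β` in `G` (for `α ∈ V`, `β ∈ B`). -/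
def hist (G : DMG V) (B : Set V) : DMG (V ⊕ {x : V // x ∈ B}) where
  dir := G.histDir B
  bi := G.histBi B
  bi_symm x y h := by
    cases x <;> cases y <;>
      simp only [histBi] at h ⊢ <;>
      first
        | exact G.bi_symm _ _ h
        | exact h

end DMG

namespace DMG

variable {V : Type u}

namespace Step

variable {G : DMG V}

/-- The reversal of a step. -/
def symm : ∀ {x y : V}, Step G x y → Step G y x
  | _, _, .dirF e => .dirB e
  | _, _, .dirB e => .dirF e
  | _, _, .bid e => .bid (G.bi_symm _ _ e)

@[simp] lemma symm_headStart : ∀ {x y : V} (s : Step G x y), s.symm.headStart = s.headEnd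
  | _, _, .dirF _ => rfl
  | _, _, .dirB _ => rfl
  | _, _, .bid _ => rfl

@[simp] lemma symm_headEnd : ∀ {x y : V} (s : Step G x y), s.symm.headEnd = s.headStart
  | _, _, .dirF _ => rfl
  | _, _, .dirB _ => rfl
  | _, _, .bid _ => rfl

/-- Mapping a step along a subgraph inclusion. -/
def map {G₁ G₂ : DMG V} (h : Sub G₁ G₂) : ∀ {x y : V}, Step G₁ x y → Step G₂ x y
  | _, _, .dirF e => .dirF (h.1 _ _ e)
  | _, _, .dirB e => .dirB (h.1 _ _ e)
  | _, _, .bid e => .bid (h.2 _ _ e)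

@[simp] lemma map_headStart {G₁ G₂ : DMG V} (h : Sub G₁ G₂) :
    ∀ {x y : V} (s : Step G₁ x y), (s.map h).headStart = s.headStart
  | _, _, .dirF _ => rfl
  | _, _, .dirB _ => rfl
  | _, _, .bid _ => rfl

@[simp] lemma map_headEnd {G₁ G₂ : DMG V} (h : Sub G₁ G₂) :
    ∀ {x y : V} (s : Step G₁ x y), (s.map h).headEnd = s.headEnd
  | _, _, .dirF _ => rfl
  | _, _, .dirB _ => rfl
  | _, _, .bid _ => rfl

end Step

namespace Walk

variable {G : DMG V}

/-- Concatenation of walks. -/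
def append : ∀ {x y z : V}, Walk G x y → Walk G y z → Walk G x z
  | _, _, _, .nil _, w => w
  | _, _, _, .cons s u, w => .cons s (u.append w)

@[simp] lemma nil_append {x z : V} (w : Walk G x z) : (Walk.nil x).append w = w := rfl

@[simp] lemma cons_append {x m y z : V} (s : Step G x m) (u : Walk G m y) (w : Walk G y z) :
    (Walk.cons s u).append w = .cons s (u.append w) := rfl

@[simp] lemma append_nil : ∀ {x y : V} (w : Walk G x y), w.append (.nil y) = w
  | _, _, .nil _ => rfl
  | _, _, .cons s u => by rw [cons_append, append_nil]

@[simp] lemma nontrivial_cons {x m y : V} (s : Step G x m) (u : Walk G m y) :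
    (Walk.cons s u).Nontrivial := trivial

lemma nontrivial_append_right {x y z : V} (w₁ : Walk G x y) {w₂ : Walk G y z}
    (h : w₂.Nontrivial) : (w₁.append w₂).Nontrivial := by
  cases w₁ with
  | nil => exact h
  | cons s u => exact trivial

lemma lastHead_cons_of_nontrivial {x m y : V} (s : Step G x m) {u : Walk G m y}
    (hu : u.Nontrivial) : (Walk.cons s u).lastHead = u.lastHead := by
  cases u with
  | nil => exact hu.elim
  | cons t v => rfl

lemma lastHead_append_of_nontrivial {x y z : V} (w₁ : Walk G x y) {w₂ : Walk G y z}
    (h : w₂.Nontrivial) : (w₁.append w₂).lastHead = w₂.lastHead := by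
  induction w₁ with
  | nil => rfl
  | cons s u ih =>
      rw [cons_append, lastHead_cons_of_nontrivial s (nontrivial_append_right u h), ih h]

lemma firstHead_append_of_nontrivial {x y z : V} {w₁ : Walk G x y} (w₂ : Walk G y z)
    (h : w₁.Nontrivial) : (w₁.append w₂).firstHead = w₁.firstHead := by
  cases w₁ with
  | nil => exact h.elim
  | cons s u => rfl

/-- The mark at the end of `w`, where `h` is the fallback for a trivial walk. -/
def tailMark {x y : V} (h : Bool) (w : Walk G x y) : Bool :=
  match w with
  | .nil _ => h
  | .cons s u => (Walk.cons s u).lastHead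

lemma tailMark_eq {x m y : V} (s : Step G x m) (u : Walk G m y) :
    tailMark s.headEnd u = (Walk.cons s u).lastHead := by
  cases u with
  | nil => rfl
  | cons t v => rfl

lemma openFrom_append (C An : Set V) : ∀ {x y z : V} (w₁ : Walk G x y) (w₂ : Walk G y z)
    (h : Bool), openFrom C An h (w₁.append w₂) ↔
      openFrom C An h w₁ ∧ openFrom C An (tailMark h w₁) w₂ := by
  intro x y z w₁
  induction w₁ with
  | nil => intro w₂ h; simp [openFrom, tailMark]
  | cons s u ih =>
      intro w₂ h
      rw [cons_append]
      show (_ ∧ openFrom C An s.headEnd (u.append w₂)) ↔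
        ((_ ∧ openFrom C An s.headEnd u) ∧ openFrom C An ((Walk.cons s u).lastHead) w₂)
      rw [ih, tailMark_eq, and_assoc]

/-- Conditions at the internal nodes only. -/
def midOK (C An : Set V) : ∀ {x y : V}, Walk G x y → Prop
  | _, _, .nil _ => True
  | _, _, .cons s u => openFrom C An s.headEnd u

lemma openFrom_cons (C An : Set V) {x m y : V} (s : Step G x m) (u : Walk G m y) (h : Bool) :
    openFrom C An h (Walk.cons s u) ↔
      (if h && s.headStart then x ∈ An else x ∉ C) ∧ midOK C An (Walk.cons s u) := Iff.rfl

lemma midOK_of_openFrom {C An : Set V} {x y : V} {w : Walk G x y} {h : Bool}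
    (hw : openFrom C An h w) : midOK C An w := by
  cases w with
  | nil => trivial
  | cons t v => exact hw.2

lemma midOK_append {C An : Set V} {x y z : V} {w₁ : Walk G x y} {w₂ : Walk G y z}
    (h₁ : midOK C An w₁) (h₂ : midOK C An w₂)
    (hj : w₁.Nontrivial → w₂.Nontrivial →
      (if w₁.lastHead && w₂.firstHead then y ∈ An else y ∉ C)) :
    midOK C An (w₁.append w₂) := by
  cases w₁ with
  | nil => exact h₂
  | cons s u =>
      cases w₂ with
      | nil => rw [append_nil]; exact h₁
      | cons t v =>
          show openFrom C An s.headEnd (u.append (Walk.cons t v))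
          rw [openFrom_append, tailMark_eq]
          exact ⟨h₁, hj trivial trivial, h₂⟩

/-- The reversal of a walk. -/
def reverse : ∀ {x y : V}, Walk G x y → Walk G y x
  | _, _, .nil x => .nil x
  | _, _, .cons s u => u.reverse.append (.cons s.symm (.nil _))

lemma nontrivial_reverse {x y : V} {w : Walk G x y} (h : w.Nontrivial) :
    w.reverse.Nontrivial := by
  cases w with
  | nil => exact h.elim
  | cons s u => exact nontrivial_append_right _ (nontrivial_cons _ _)

lemma firstHead_reverse : ∀ {x y : V} (w : Walk G x y), w.reverse.firstHead = w.lastHead := by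
  intro x y w
  induction w with
  | nil => rfl
  | cons s u ih =>
      cases u with
      | nil => simp [reverse, firstHead, Step.symm_headStart, lastHead]
      | cons t v =>
          show ((Walk.cons t v).reverse.append _).firstHead = _
          rw [firstHead_append_of_nontrivial _ (nontrivial_reverse (nontrivial_cons _ _)), ih,
            lastHead_cons_of_nontrivial s (nontrivial_cons _ _)]

lemma lastHead_reverse {x y : V} (w : Walk G x y) : w.reverse.lastHead = w.firstHead := by
  cases w with
  | nil => rfl
  | cons s u =>
      show (u.reverse.append (Walk.cons s.symm (.nil _))).lastHead = _
      rw [lastHead_append_of_nontrivial _ (nontrivial_cons _ _)]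
      show s.symm.headEnd = _
      rw [Step.symm_headEnd]
      rfl

lemma midOK_reverse {C An : Set V} : ∀ {x y : V} {w : Walk G x y},
    midOK C An w → midOK C An w.reverse := by
  intro x y w
  induction w with
  | nil => intro _; trivial
  | cons s u ih =>
      intro hmid
      cases u with
      | nil => trivial
      | cons t v =>
          show midOK C An ((Walk.cons t v).reverse.append (Walk.cons s.symm (.nil _)))
          have hm : midOK C An (Walk.cons t v) := midOK_of_openFrom hmid
          refine midOK_append (ih hm) trivial ?_
          intro _ _
          rw [lastHead_reverse]
          show (if (Walk.cons t v).firstHead && s.symm.headStart then _ else _)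
          rw [Step.symm_headStart]
          show (if t.headStart && s.headEnd then _ else _)
          rw [Bool.and_comm]
          exact hmid.1
  
/-- Mapping a walk along a subgraph inclusion. -/
def map {G₁ G₂ : DMG V} (h : Sub G₁ G₂) : ∀ {x y : V}, Walk G₁ x y → Walk G₂ x y
  | _, _, .nil x => .nil x
  | _, _, .cons s u => .cons (s.map h) (u.map h)

lemma nontrivial_map {G₁ G₂ : DMG V} (h : Sub G₁ G₂) {x y : V} {w : Walk G₁ x y}
    (hw : w.Nontrivial) : (w.map h).Nontrivial := by
  cases w with
  | nil => exact hw.elim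
  | cons s u => exact trivial

lemma lastHead_map {G₁ G₂ : DMG V} (h : Sub G₁ G₂) : ∀ {x y : V} (w : Walk G₁ x y),
    (w.map h).lastHead = w.lastHead := by
  intro x y w
  induction w with
  | nil => rfl
  | cons s u ih =>
      cases u with
      | nil => show (s.map h).headEnd = s.headEnd; rw [Step.map_headEnd]
      | cons t v =>
          rw [lastHead_cons_of_nontrivial s (nontrivial_cons _ _)]
          show (Walk.cons (s.map h) ((Walk.cons t v).map h)).lastHead = _
          rw [lastHead_cons_of_nontrivial (s.map h) (nontrivial_map h (nontrivial_cons _ _)), ih]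

lemma openFrom_map {G₁ G₂ : DMG V} (h : Sub G₁ G₂) (C An : Set V) :
    ∀ {x y : V} (w : Walk G₁ x y) (hb : Bool),
      openFrom C An hb (w.map h) ↔ openFrom C An hb w := by
  intro x y w
  induction w with
  | nil => intro hb; exact Iff.rfl
  | cons s u ih =>
      intro hb
      show (_ ∧ openFrom C An (s.map h).headEnd (u.map h)) ↔ _
      rw [Step.map_headStart, Step.map_headEnd, ih]
      exact Iff.rfl

end Walk

end DMG


namespace DMG

variable {V : Type u} {G : DMG V}

lemma anc_of_sub {G₁ G₂ : DMG V} (h : Sub G₁ G₂) {x y : V} (hxy : G₁.anc x y) : G₂.anc x y :=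
  Relation.ReflTransGen.mono (fun a b hab => h.1 a b hab) _ _ hxy

lemma sub_addDir (G : DMG V) (a b : V) : Sub G (G.addDir a b) :=
  ⟨fun _ _ h => Or.inl h, fun _ _ h => h⟩

lemma anc_addDir {a b : V} (hab : G.anc a b) {x y : V}
    (h : (G.addDir a b).anc x y) : G.anc x y := by
  induction h with
  | refl => exact Relation.ReflTransGen.refl
  | tail h₁ h₂ ih =>
      rcases h₂ with h₂ | ⟨rfl, rfl⟩
      · exact ih.tail h₂
      · exact ih.trans hab

lemma anSet_addDir {a b : V} (hab : G.anc a b) (C : Set V) :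
    (G.addDir a b).anSet C = G.anSet C := by
  ext x
  constructor
  · rintro ⟨c, hc, h⟩; exact ⟨c, hc, anc_addDir hab h⟩
  · rintro ⟨c, hc, h⟩; exact ⟨c, hc, anc_of_sub (G.sub_addDir a b) h⟩

lemma Walk.muConn_iff (C : Set V) {x y : V} (w : Walk G x y) :
    w.MuConn C ↔ w.Nontrivial ∧ Walk.openFrom C (G.anSet C) false w ∧ w.lastHead = true := by
  cases w with
  | nil => simp [Walk.MuConn, Walk.Nontrivial]
  | cons s u =>
      show (x ∉ C ∧ _ ∧ _) ↔ _
      simp only [Walk.Nontrivial, Walk.openFrom, Bool.false_and, true_and]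
      rw [if_neg (by simp)]
      exact and_assoc.symm

lemma nodes_ne_nil {x y : V} (w : Walk G x y) : w.nodes ≠ [] := by
  cases w with
  | nil => simp [Walk.nodes]
  | cons s u => simp [Walk.nodes]

lemma dropLast_cons_nodes {m y : V} (w : Walk G m y) (c : V) :
    (c :: w.nodes).dropLast = c :: w.nodes.dropLast := by
  obtain ⟨n, l, hl⟩ : ∃ n l, w.nodes = n :: l := by
    cases hn : w.nodes with
    | nil => exact absurd hn (nodes_ne_nil w)
    | cons n l => exact ⟨n, l, rfl⟩
  rw [hl, List.dropLast_cons₂]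

/-- Directed reachability of `b` from `x` avoiding `C` at intermediate nodes. -/
def relS (G : DMG V) (C : Set V) (b : V) (x y : V) : Prop :=
  G.dir x y ∧ (y ∉ C ∨ y = b)

lemma toWalk {C An : Set V} {b g : V} (hr : Relation.ReflTransGen (G.relS C b) g b)
    (hg : g ∉ C) :
    ∃ r : Walk G g b, Walk.openFrom C An true r ∧ (r.Nontrivial → r.lastHead = true) := by
  revert hg
  induction hr using Relation.ReflTransGen.head_induction_on with
  | refl => exact fun _ => ⟨.nil _, trivial, fun h => False.elim h⟩
  | @head x v hst hrest ih =>
      intro hg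
      obtain ⟨e, hv⟩ := hst
      rcases hv with hv | rfl
      · obtain ⟨r, hr1, hr2⟩ := ih hv
        refine ⟨.cons (.dirF e) r, ⟨?_, hr1⟩, fun _ => ?_⟩
        · show (if true && (Step.dirF e : Step G x v).headStart then x ∈ An else x ∉ C)
          simpa [Step.headStart] using hg
        · cases r with
          | nil => rfl
          | cons t v' =>
              rw [Walk.lastHead_cons_of_nontrivial _ (Walk.nontrivial_cons _ _)]
              exact hr2 (Walk.nontrivial_cons _ _)
      · refine ⟨.cons (.dirF e) (.nil _), ⟨?_, trivial⟩, fun _ => rfl⟩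
        show (if true && (Step.dirF e).headStart then x ∈ An else x ∉ C)
        simpa [Step.headStart] using hg

lemma anc_dichotomy {C : Set V} {b g : V} (h : G.anc g b) :
    Relation.ReflTransGen (G.relS C b) g b ∨ g ∈ G.anSet C := by
  induction h using Relation.ReflTransGen.head_induction_on with
  | refl => exact Or.inl .refl
  | @head x v hst hrest ih =>
      rcases ih with hR | hAn
      · by_cases hv : v ∉ C ∨ v = b
        · exact Or.inl (Relation.ReflTransGen.head ⟨hst, hv⟩ hR)
        · push_neg at hv
          exact Or.inr ⟨v, hv.1, Relation.ReflTransGen.single hst⟩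
      · obtain ⟨c, hc, hvc⟩ := hAn
        exact Or.inr ⟨c, hc, Relation.ReflTransGen.head hst hvc⟩

lemma core {C : Set V} {b : V} : ∀ {g : V} (u : Walk G g b), u.AllBid →
    (∀ x ∈ u.nodes.dropLast, G.anc x b) →
    ∃ r : Walk G g b, Walk.openFrom C (G.anSet C) true r ∧
      (r.Nontrivial → r.lastHead = true) := by
  intro g u
  induction u with
  | nil => exact fun _ _ => ⟨.nil _, trivial, fun h => False.elim h⟩
  | @cons g m b t u' ih =>
      intro hbid hanc
      cases t with
      | dirF e => exact hbid.1.elim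
      | dirB e => exact hbid.1.elim
      | bid e =>
          have hanc' : ∀ x ∈ u'.nodes.dropLast, G.anc x b := by
            intro x hx
            apply hanc
            show x ∈ (g :: u'.nodes).dropLast
            rw [dropLast_cons_nodes]
            exact List.mem_cons_of_mem _ hx
          have hgb : G.anc g b := by
            apply hanc
            show g ∈ (g :: u'.nodes).dropLast
            rw [dropLast_cons_nodes]
            exact List.mem_cons_self
          have key : g ∈ G.anSet C →
              ∃ r : Walk G g b, Walk.openFrom C (G.anSet C) true r ∧
                (r.Nontrivial → r.lastHead = true) := by
            intro hgA
            obtain ⟨r', h1, h2⟩ := ih hbid.2 hanc'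
            refine ⟨.cons (.bid e) r', ⟨?_, h1⟩, fun _ => ?_⟩
            · show (if true && (Step.bid e : Step G g m).headStart
                then g ∈ G.anSet C else g ∉ C)
              simpa [Step.headStart] using hgA
            · cases r' with
              | nil => rfl
              | cons t' v' =>
                  rw [Walk.lastHead_cons_of_nontrivial _ (Walk.nontrivial_cons _ _)]
                  exact h2 (Walk.nontrivial_cons _ _)
          by_cases hg : g ∈ C
          · exact key ⟨g, hg, .refl⟩
          · by_cases hR : Relation.ReflTransGen (G.relS C b) g b
            · exact toWalk hR hg
            · rcases anc_dichotomy hgb with hR' | hA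
              · exact (hR hR').elim
              · exact key hA

lemma anc_of_IP {a b : V} (hIP : ∃ w : Walk G a b, G.IsDirectedIP w) : G.anc a b := by
  obtain ⟨w, _, huni, hint⟩ := hIP
  cases w with
  | nil => exact False.elim huni
  | cons s u =>
      cases s with
      | dirB e => exact False.elim huni.1
      | bid e => exact False.elim huni.1
      | dirF e =>
          cases u with
          | nil => exact Relation.ReflTransGen.single e
          | cons t v =>
              refine Relation.ReflTransGen.head e (hint _ ?_)
              show _ ∈ ((a :: (Walk.cons t v).nodes).dropLast).drop 1
              rw [dropLast_cons_nodes]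
              show _ ∈ (Walk.cons t v).nodes.dropLast
              show _ ∈ (_ :: v.nodes).dropLast
              rw [dropLast_cons_nodes]
              exact List.mem_cons_self

lemma replacement {a b : V} (hIP : ∃ w : Walk G a b, G.IsDirectedIP w) (C : Set V) :
    ∃ R : Walk G a b, R.Nontrivial ∧ R.firstHead = false ∧ R.lastHead = true ∧
      Walk.midOK C (G.anSet C) R := by
  obtain ⟨w, _, huni, hint⟩ := hIP
  cases w with
  | nil => exact False.elim huni
  | cons s u =>
      cases s with
      | dirB e => exact False.elim huni.1
      | bid e => exact False.elim huni.1
      | dirF e =>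
          have hint' : ∀ x ∈ u.nodes.dropLast, G.anc x b := by
            intro x hx
            apply hint
            show x ∈ ((a :: u.nodes).dropLast).drop 1
            rw [dropLast_cons_nodes]
            exact hx
          obtain ⟨r, h1, h2⟩ := core u huni.2 hint'
          refine ⟨.cons (.dirF e) r, Walk.nontrivial_cons _ _, rfl, ?_, h1⟩
          cases r with
          | nil => rfl
          | cons t v =>
              rw [Walk.lastHead_cons_of_nontrivial _ (Walk.nontrivial_cons _ _)]
              exact h2 (Walk.nontrivial_cons _ _)

lemma Walk.nontrivial_append_left {x y z : V} {w₁ : Walk G x y} (h : w₁.Nontrivial)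
    (w₂ : Walk G y z) : (w₁.append w₂).Nontrivial := by
  cases w₁ with
  | nil => exact False.elim h
  | cons s u => exact Walk.nontrivial_cons _ _

lemma transfer {G' : DMG V} (C An : Set V)
    (hstep : ∀ (x m : V) (s : Step G' x m), ∃ r : Walk G x m, r.Nontrivial ∧
      r.firstHead = s.headStart ∧ r.lastHead = s.headEnd ∧ Walk.midOK C An r) :
    ∀ {x y : V} (w : Walk G' x y), ∃ w' : Walk G x y,
      (w.Nontrivial ↔ w'.Nontrivial) ∧ w'.firstHead = w.firstHead ∧
      w'.lastHead = w.lastHead ∧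
      ∀ h : Bool, Walk.openFrom C An h w → Walk.openFrom C An h w' := by
  intro x y w
  induction w with
  | nil =>
      refine ⟨.nil _, ?_, ?_, ?_, ?_⟩
      · exact Iff.rfl
      · rfl
      · rfl
      · exact fun _ _ => trivial
  | @cons x m y s v ih =>
      obtain ⟨r, hrN, hrF, hrL, hrM⟩ := hstep x m s
      obtain ⟨v', hvN, hvF, hvL, hvO⟩ := ih
      refine ⟨r.append v', ?_, ?_, ?_, ?_⟩
      · exact ⟨fun _ => Walk.nontrivial_append_left hrN v', fun _ => Walk.nontrivial_cons _ _⟩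
      · rw [Walk.firstHead_append_of_nontrivial v' hrN, hrF]
        rfl
      · cases v with
        | nil =>
            cases v' with
            | cons t' u' => exact absurd (hvN.mpr (Walk.nontrivial_cons _ _)) (fun h => h)
            | nil => rw [Walk.append_nil, hrL]; rfl
        | cons t u =>
            have hv'N : v'.Nontrivial := hvN.mp (Walk.nontrivial_cons _ _)
            rw [Walk.lastHead_append_of_nontrivial r hv'N, hvL,
              Walk.lastHead_cons_of_nontrivial s (Walk.nontrivial_cons _ _)]
      · intro h hw
        rw [Walk.openFrom_append]
        cases r with
        | nil => exact hrN.elim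
        | cons s₀ u₀ =>
            have hF : s₀.headStart = s.headStart := hrF
            constructor
            · show (if h && s₀.headStart then x ∈ An else x ∉ C) ∧
                Walk.openFrom C An s₀.headEnd u₀
              rw [hF]
              exact ⟨hw.1, hrM⟩
            · show Walk.openFrom C An ((Walk.cons s₀ u₀).lastHead) v'
              rw [hrL]
              exact hvO _ hw.2

lemma hstep_addDir {a b : V} (hIP : ∃ w : Walk G a b, G.IsDirectedIP w) (C : Set V)
    (x m : V) (s : Step (G.addDir a b) x m) :
    ∃ r : Walk G x m, r.Nontrivial ∧ r.firstHead = s.headStart ∧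
      r.lastHead = s.headEnd ∧ Walk.midOK C (G.anSet C) r := by
  obtain ⟨R, hRN, hRF, hRL, hRM⟩ := replacement hIP C
  cases s with
  | dirF e =>
      rcases e with e | ⟨rfl, rfl⟩
      · exact ⟨.cons (.dirF e) (.nil m), Walk.nontrivial_cons _ _, rfl, rfl, trivial⟩
      · exact ⟨R, hRN, hRF, hRL, hRM⟩
  | dirB e =>
      rcases e with e | ⟨rfl, rfl⟩
      · exact ⟨.cons (.dirB e) (.nil m), Walk.nontrivial_cons _ _, rfl, rfl, trivial⟩
      · exact ⟨R.reverse, Walk.nontrivial_reverse hRN,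
          by rw [Walk.firstHead_reverse, hRL]; rfl, by rw [Walk.lastHead_reverse, hRF]; rfl,
          Walk.midOK_reverse hRM⟩
  | bid e => exact ⟨.cons (.bid e) (.nil m), Walk.nontrivial_cons _ _, rfl, rfl, trivial⟩

end DMG


/-- Proposition 9: if there is a directed inducing path
from `a` to `b` in `G`, then adding the directed edge `a → b` does not change
the independence model: `I(G⁺) = I(G)`. -/
theorem stmt10 {V : Type u} [Fintype V] (G : DMG V) (a b : V)
    (h : ∃ w : DMG.Walk G a b, G.IsDirectedIP w) :
    DMG.MarkovEq (G.addDir a b) G := by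
  have hab : G.anc a b := DMG.anc_of_IP h
  intro A B C
  have hAn : (G.addDir a b).anSet C = G.anSet C := DMG.anSet_addDir hab C
  constructor
  · intro hsep a₀ b₀ ha hb w hw
    refine hsep ha hb (w.map (G.sub_addDir a b)) ?_
    rw [DMG.Walk.muConn_iff] at hw ⊢
    rw [hAn]
    exact ⟨DMG.Walk.nontrivial_map _ hw.1,
      (DMG.Walk.openFrom_map _ _ _ _ _).mpr hw.2.1,
      by rw [DMG.Walk.lastHead_map]; exact hw.2.2⟩
  · intro hsep a₀ b₀ ha hb w hw
    rw [DMG.Walk.muConn_iff, hAn] at hw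
    obtain ⟨w', hN, hF, hL, hO⟩ := DMG.transfer C (G.anSet C) (DMG.hstep_addDir h C) w
    refine hsep ha hb w' ?_
    rw [DMG.Walk.muConn_iff]
    exact ⟨hN.mp hw.1, hO false hw.2.1, by rw [hL]; exact hw.2.2⟩
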